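/- Let n−k ≤ h ≤ n−2 and 2 ≤ k ≤ n−1, and let X be the set of k-arrangements of {1,...,n} whose last n−1−h digits are 1,2,...,(n−1−h) in order. Then every neighbor in S_{n,k} of a vertex of X that lies outside X is a swap-neighbor, no two distinct vertices of X share a common neighbor outside X, and each vertex of X has exactly n−1−h neighbors outside X. Consequently the set T of neighbors of X outside X satisfies |T| = (h+1)!(n−1−h)/(n−k)!. -/

import Mathlib

open SimpleGraph

/-- `q` is a swap-neighbor of `p` in the (n,k)-star graph: it is obtained from `p`
by swapping the first digit with the `i`-th digit for some `i ≠ 0`. -/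
def swapAdj {n k : ℕ} [NeZero k] (p q : Fin k ↪ Fin n) : Prop :=
  ∃ i : Fin k, i ≠ 0 ∧ q 0 = p i ∧ q i = p 0 ∧
    ∀ j : Fin k, j ≠ 0 → j ≠ i → q j = p j

/-- `q` is an unswap-neighbor of `p`: obtained by replacing the first digit of `p`
by a symbol not occurring in `p`. -/
def unswapAdj {n k : ℕ} [NeZero k] (p q : Fin k ↪ Fin n) : Prop :=
  (∀ j : Fin k, j ≠ 0 → q j = p j) ∧ ∀ j : Fin k, q 0 ≠ p j

/-- The (n,k)-star graph `S_{n,k}` on the k-arrangements of an n-set. -/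
def nkStar (n k : ℕ) [NeZero k] : SimpleGraph (Fin k ↪ Fin n) :=
  SimpleGraph.fromRel (fun p q => swapAdj p q ∨ unswapAdj p q)

/-- The n-dimensional star graph `S_n` on permutations, adjacency by swapping the
first digit with the `i`-th digit, `i ≠ 0`. -/
def starGraph (n : ℕ) [NeZero n] : SimpleGraph (Equiv.Perm (Fin n)) :=
  SimpleGraph.fromRel (fun p q => ∃ i : Fin n, i ≠ 0 ∧ q = p * Equiv.swap 0 i)

/-- `T` is an h-vertex-cut: `G - T` is disconnected and has minimum degree at least `h`. -/
def IsHVertexCut {V : Type*} (G : SimpleGraph V) (h : ℕ) (T : Set V) : Prop :=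
  ¬ (G.induce Tᶜ).Connected ∧ ∀ v, v ∉ T → h ≤ (G.neighborSet v \ T).ncard

/-- The h-super connectivity `κ_s^{(h)}(G)`. -/
noncomputable def kappaS {V : Type*} (G : SimpleGraph V) (h : ℕ) : ℕ :=
  sInf {m | ∃ T : Set V, IsHVertexCut G h T ∧ T.ncard = m}

/-- `F` is an h-edge-cut: `G - F` is disconnected and has minimum degree at least `h`. -/
def IsHEdgeCut {V : Type*} (G : SimpleGraph V) (h : ℕ) (F : Set (Sym2 V)) : Prop :=
  F ⊆ G.edgeSet ∧ ¬ (G.deleteEdges F).Connected ∧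
    ∀ v : V, h ≤ ((G.deleteEdges F).neighborSet v).ncard

/-- The h-super edge-connectivity `λ_s^{(h)}(G)`. -/
noncomputable def lambdaS {V : Type*} (G : SimpleGraph V) (h : ℕ) : ℕ :=
  sInf {m | ∃ F : Set (Sym2 V), IsHEdgeCut G h F ∧ F.ncard = m}

/-- `G'` together with the projection `π` is a `t`-split graph of `G`: fibers of `π`
have size `t` and are independent, `π` is a graph homomorphism, and over each edge of
`G` the edges of `G'` form a perfect matching between the two fibers. -/
structure IsSplitGraph {V W : Type*} (G : SimpleGraph V) (t : ℕ)
    (G' : SimpleGraph W) (π : W → V) : Prop where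
  fiber_card : ∀ v : V, Nat.card (π ⁻¹' {v}) = t
  indep : ∀ x y : W, π x = π y → ¬ G'.Adj x y
  adj_map : ∀ x y : W, G'.Adj x y → G.Adj (π x) (π y)
  matching : ∀ (x : W) (v : V), G.Adj (π x) v → ∃! z : W, π z = v ∧ G'.Adj x z

/-- The prefix map sending a permutation of `{1,...,n}` to its length-`k` prefix. -/
def prefixMap (n k : ℕ) (hkn : k ≤ n) (p : Equiv.Perm (Fin n)) : Fin k ↪ Fin n :=
  (Fin.castLEEmb hkn).trans p.toEmbedding

/-- The set `X` of k-arrangements whose last `n-1-h` digits are `1,2,...,n-1-h` in order. -/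
def lastFixed (n k h : ℕ) : Set (Fin k ↪ Fin n) :=
  {u | ∀ i : Fin k, k - (n - 1 - h) ≤ i.val → (u i).val = i.val - (k - (n - 1 - h))}


section LastFixedAux
set_option linter.unusedSectionVars false
variable {n k h : ℕ} [NeZero k]

lemma swapAdj_symm {p q : Fin k ↪ Fin n} (H : swapAdj p q) : swapAdj q p := by
  obtain ⟨i, hi0, e1, e2, e3⟩ := H
  exact ⟨i, hi0, e2.symm, e1.symm, fun j hj0 hji => (e3 j hj0 hji).symm⟩

variable (hk2 : 2 ≤ k) (hk : k ≤ n - 1) (h1 : n - k ≤ h) (h2 : h ≤ n - 2)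

include hk2 hk h1 h2

/-- A head value of a member of lastFixed is at least n-1-h. -/
lemma head_val {u : Fin k ↪ Fin n} (hu : u ∈ lastFixed n k h) {j : Fin k}
    (hj : j.val < k - (n - 1 - h)) : n - 1 - h ≤ (u j).val := by
  by_contra hlt
  push_neg at hlt
  have hik : k - (n - 1 - h) + (u j).val < k := by omega
  have h5 := hu ⟨_, hik⟩ (Nat.le_add_right _ _)
  simp only at h5
  have heq : u ⟨_, hik⟩ = u j := Fin.ext (by omega)
  have h6 : (⟨_, hik⟩ : Fin k).val = j.val := congrArg Fin.val (u.injective heq)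
  simp only at h6
  omega

/-- outside swap neighbors: the swap index is in the tail. -/
lemma swap_tail {u v : Fin k ↪ Fin n} (hu : u ∈ lastFixed n k h)
    (hv : v ∉ lastFixed n k h) (H : swapAdj u v) :
    ∃ i : Fin k, k - (n - 1 - h) ≤ i.val ∧ v 0 = u i ∧ v i = u 0 ∧
      ∀ j : Fin k, j ≠ 0 → j ≠ i → v j = u j := by
  obtain ⟨i, hi0, e1, e2, e3⟩ := H
  refine ⟨i, ?_, e1, e2, e3⟩
  by_contra hic
  push_neg at hic
  apply hv
  intro j hj
  have hz0 : (0 : Fin k).val = 0 := rfl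
  have hj0 : j ≠ 0 := by
    intro e
    have := congrArg Fin.val e
    omega
  have hji : j ≠ i := by
    intro e
    have := congrArg Fin.val e
    omega
  rw [e3 j hj0 hji]
  exact hu j hj

/-- every outside neighbor is a swap neighbor. -/
lemma claim1 {u v : Fin k ↪ Fin n} (hu : u ∈ lastFixed n k h)
    (hv : v ∉ lastFixed n k h) (hadj : (nkStar n k).Adj u v) : swapAdj u v := by
  rw [nkStar, fromRel_adj] at hadj
  obtain ⟨hne, hrel⟩ := hadj
  have hz0 : (0 : Fin k).val = 0 := rfl
  have hmem : ∀ w : Fin k ↪ Fin n, (∀ j : Fin k, j ≠ 0 → w j = u j) →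
      w ∈ lastFixed n k h := by
    intro w hw j hj
    have hj0 : j ≠ 0 := by
      intro e
      have := congrArg Fin.val e
      omega
    rw [hw j hj0]; exact hu j hj
  rcases hrel with (hs | hus) | (hs | hus)
  · exact hs
  · exact absurd (hmem v hus.1) hv
  · exact swapAdj_symm hs
  · exact absurd (hmem v (fun j hj => (hus.1 j hj).symm)) hv

/-- two members of X with a common outside swap-neighbor are equal. -/
lemma claim2 {u₁ u₂ v : Fin k ↪ Fin n} (hu₁ : u₁ ∈ lastFixed n k h)
    (hu₂ : u₂ ∈ lastFixed n k h) (hv : v ∉ lastFixed n k h)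
    (s1 : swapAdj u₁ v) (s2 : swapAdj u₂ v) : u₁ = u₂ := by
  obtain ⟨i₁, hi₁, a1, a2, a3⟩ := swap_tail hk2 hk h1 h2 hu₁ hv s1
  obtain ⟨i₂, hi₂, b1, b2, b3⟩ := swap_tail hk2 hk h1 h2 hu₂ hv s2
  have hz0 : (0 : Fin k).val = 0 := rfl
  have hval1 : n - 1 - h ≤ (v i₁).val := by
    rw [a2]; exact head_val hk2 hk h1 h2 hu₁ (by omega)
  have hval2 : n - 1 - h ≤ (v i₂).val := by
    rw [b2]; exact head_val hk2 hk h1 h2 hu₂ (by omega)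
  have hii : i₁ = i₂ := by
    by_contra hne
    have hi₂0 : i₂ ≠ 0 := by
      intro e
      have := congrArg Fin.val e
      omega
    have := a3 i₂ hi₂0 (Ne.symm hne)
    rw [this] at hval2
    have := hu₁ i₂ hi₂
    omega
  subst hii
  have hi₁0 : i₁ ≠ 0 := by
    intro e
    have := congrArg Fin.val e
    omega
  apply Function.Embedding.ext
  intro j
  by_cases hj0 : j = 0
  · subst hj0; rw [← a2]; exact b2
  · by_cases hji : j = i₁
    · subst hji; rw [← a1, ← b1]
    · rw [← a3 j hj0 hji, ← b3 j hj0 hji]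


def swapAt (u : Fin k ↪ Fin n) (i : Fin k) : Fin k ↪ Fin n :=
  (Equiv.swap 0 i).toEmbedding.trans u

omit hk2 hk h1 h2 in
lemma swapAt_zero (u : Fin k ↪ Fin n) (i : Fin k) : swapAt u i 0 = u i := by
  simp [swapAt, Equiv.swap_apply_left]

omit hk2 hk h1 h2 in
lemma swapAt_self (u : Fin k ↪ Fin n) (i : Fin k) : swapAt u i i = u 0 := by
  simp [swapAt, Equiv.swap_apply_right]

omit hk2 hk h1 h2 in
lemma swapAt_other (u : Fin k ↪ Fin n) {i j : Fin k} (hj0 : j ≠ 0) (hji : j ≠ i) :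
    swapAt u i j = u j := by
  simp [swapAt, Equiv.swap_apply_of_ne_of_ne hj0 hji]

lemma claim3_set {u : Fin k ↪ Fin n} (hu : u ∈ lastFixed n k h) :
    (nkStar n k).neighborSet u \ lastFixed n k h
      = swapAt u '' {i : Fin k | k - (n - 1 - h) ≤ i.val} := by
  have hz0 : (0 : Fin k).val = 0 := rfl
  have hhead : n - 1 - h ≤ (u 0).val := head_val hk2 hk h1 h2 hu (by omega)
  ext w
  constructor
  · rintro ⟨hadj, hw⟩
    have hs := claim1 hk2 hk h1 h2 hu hw hadj
    obtain ⟨i, hi, e1, e2, e3⟩ := swap_tail hk2 hk h1 h2 hu hw hs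
    have hi0 : i ≠ 0 := by
      intro e; have := congrArg Fin.val e; omega
    refine ⟨i, hi, ?_⟩
    apply Function.Embedding.ext
    intro j
    by_cases hj0 : j = 0
    · subst hj0; rw [swapAt_zero]; exact e1.symm
    · by_cases hji : j = i
      · subst hji; rw [swapAt_self]; exact e2.symm
      · rw [swapAt_other u hj0 hji]; exact (e3 j hj0 hji).symm
  · rintro ⟨i, hi, rfl⟩
    have hi0 : i ≠ 0 := by
      rintro rfl; simp only [Set.mem_setOf_eq, Fin.val_zero] at hi; omega
    have hsw : swapAdj u (swapAt u i) :=
      ⟨i, hi0, swapAt_zero u i, swapAt_self u i, fun j hj0 hji => swapAt_other u hj0 hji⟩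
    have hnotX : swapAt u i ∉ lastFixed n k h := by
      intro hmem
      have := hmem i hi
      rw [swapAt_self] at this
      omega
    have hne : u ≠ swapAt u i := by
      intro e
      have : u 0 = u i := by
        conv_lhs => rw [e]
        rw [swapAt_zero]
      exact hi0 (u.injective this).symm
    have hadj : (nkStar n k).Adj u (swapAt u i) := by
      rw [nkStar, fromRel_adj]
      exact ⟨hne, Or.inl (Or.inl hsw)⟩
    exact ⟨hadj, hnotX⟩

lemma tail_ncard : ({i : Fin k | k - (n - 1 - h) ≤ i.val}).ncard = n - 1 - h := by
  have hck : k - (n - 1 - h) < k := by omega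
  have : {i : Fin k | k - (n - 1 - h) ≤ i.val}
      = ↑(Finset.Ici (⟨k - (n - 1 - h), hck⟩ : Fin k)) := by
    ext i
    simp [Fin.le_def]
  rw [this, Set.ncard_coe_finset, Fin.card_Ici]
  simp
  omega

lemma claim3 {u : Fin k ↪ Fin n} (hu : u ∈ lastFixed n k h) :
    ((nkStar n k).neighborSet u \ lastFixed n k h).ncard = n - 1 - h := by
  rw [claim3_set hk2 hk h1 h2 hu, Set.ncard_image_of_injOn, tail_ncard hk2 hk h1 h2]
  intro a _ b _ hab
  have : swapAt u a 0 = swapAt u b 0 := by rw [hab]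
  rw [swapAt_zero, swapAt_zero] at this
  exact u.injective this

lemma X_ncard : (lastFixed n k h).ncard = (h + 1).factorial / (n - k).factorial := by
  classical
  set c := k - (n - 1 - h) with hc
  set m := n - 1 - h with hm
  have hmn : m < n := by omega
  have hck : c ≤ k := by omega
  have hcm : c + m = k := by omega
  -- the equivalence
  have e : ↥(lastFixed n k h) ≃ (Fin c ↪ Fin (n - m)) := by
    refine
      { toFun := fun u => ⟨fun j => ⟨(u.1 (Fin.castLE hck j)).val - m, ?_⟩, ?_⟩
        invFun := fun e =>
          ⟨⟨fun j => if hj : j.val < c then ⟨(e ⟨j.val, hj⟩).val + m, ?_⟩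
              else ⟨j.val - c, ?_⟩, ?_⟩, ?_⟩
        left_inv := ?_
        right_inv := ?_ }
    · have hb := (u.1 (Fin.castLE hck j)).isLt
      have := head_val hk2 hk h1 h2 u.2 (j := Fin.castLE hck j)
        (by exact j.isLt)
      omega
    · intro a b hab
      have ha := head_val hk2 hk h1 h2 u.2 (j := Fin.castLE hck a) (by exact a.isLt)
      have hb := head_val hk2 hk h1 h2 u.2 (j := Fin.castLE hck b) (by exact b.isLt)
      have hv : (u.1 (Fin.castLE hck a)).val - m = (u.1 (Fin.castLE hck b)).val - m :=
        congrArg Fin.val hab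
      have : u.1 (Fin.castLE hck a) = u.1 (Fin.castLE hck b) := Fin.ext (by omega)
      have := u.1.injective this
      exact Fin.ext (by simpa using congrArg Fin.val this)
    · have := (e ⟨j.val, hj⟩).isLt; omega
    · have := j.isLt; omega
    · intro a b hab
      have hv := congrArg Fin.val hab
      by_cases hja : a.val < c <;> by_cases hjb : b.val < c <;>
        simp only [hja, hjb, dif_pos, dif_neg, not_false_iff] at hv
      · have : (e ⟨a.val, hja⟩).val = (e ⟨b.val, hjb⟩).val := by omega
        have := e.injective (Fin.ext this)
        exact Fin.ext (by simpa using congrArg Fin.val this)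
      · have := (e ⟨a.val, hja⟩).isLt
        have := b.isLt; omega
      · have := (e ⟨b.val, hjb⟩).isLt
        have := a.isLt; omega
      · have := a.isLt; have := b.isLt
        exact Fin.ext (by omega)
    · intro i hi
      exact congrArg Fin.val (dif_neg (by omega : ¬ i.val < c))
    · intro u
      apply Subtype.ext
      apply Function.Embedding.ext
      intro j
      by_cases hj : j.val < c
      · simp only [Function.Embedding.coeFn_mk, dif_pos hj]
        have := head_val hk2 hk h1 h2 u.2 (j := j) hj
        apply Fin.ext
        simp only
        have hcast : Fin.castLE hck ⟨j.val, hj⟩ = j := Fin.ext rfl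
        show (u.1 j).val - m + m = (u.1 j).val
        omega
      · simp only [Function.Embedding.coeFn_mk, dif_neg hj]
        have h9 := u.2 j (by omega)
        exact Fin.ext h9.symm
    · intro e
      apply Function.Embedding.ext
      intro j
      apply Fin.ext
      have hj : (Fin.castLE hck j).val < c := j.isLt
      simp only [Function.Embedding.coeFn_mk, dif_pos hj]
      have hcast : (⟨(Fin.castLE hck j).val, hj⟩ : Fin c) = j := Fin.ext rfl
      show ((if hj : (Fin.castLE hck j).val < c then (⟨(e ⟨(Fin.castLE hck j).val, hj⟩).val + m, _⟩ : Fin n) else ⟨(Fin.castLE hck j).val - c, _⟩) : Fin n).val - m = (e j).val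
      rw [dif_pos hj]
      exact Nat.add_sub_cancel _ _
  have h5 : (lastFixed n k h).ncard = Nat.card ↥(lastFixed n k h) :=
    (Nat.card_coe_set_eq _).symm
  rw [h5, Nat.card_congr e, Nat.card_eq_fintype_card, Fintype.card_embedding_eq,
    Fintype.card_fin, Fintype.card_fin]
  have hnm : n - m = h + 1 := by omega
  rw [hnm, Nat.descFactorial_eq_div (by omega)]
  congr 2
  omega

end LastFixedAux

theorem lastFixed_outside_neighbors (n k h : ℕ) (hk2 : 2 ≤ k) (hk : k ≤ n - 1)
    (h1 : n - k ≤ h) (h2 : h ≤ n - 2) :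
    (∀ u ∈ lastFixed n k h, ∀ v, v ∉ lastFixed n k h →
        (@nkStar n k ⟨by omega⟩).Adj u v → @swapAdj n k ⟨by omega⟩ u v) ∧
    (∀ u₁ ∈ lastFixed n k h, ∀ u₂ ∈ lastFixed n k h, u₁ ≠ u₂ →
        ∀ v, v ∉ lastFixed n k h →
          ¬ ((@nkStar n k ⟨by omega⟩).Adj u₁ v ∧ (@nkStar n k ⟨by omega⟩).Adj u₂ v)) ∧
    (∀ u ∈ lastFixed n k h,
        ((@nkStar n k ⟨by omega⟩).neighborSet u \ lastFixed n k h).ncard = n - 1 - h) ∧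
    {v | v ∉ lastFixed n k h ∧
        ∃ u ∈ lastFixed n k h, (@nkStar n k ⟨by omega⟩).Adj u v}.ncard
      = (h + 1).factorial * (n - 1 - h) / (n - k).factorial := by
  haveI : NeZero k := ⟨by omega⟩
  classical
  refine ⟨?_, ?_, ?_, ?_⟩
  · intro u hu v hv hadj
    exact claim1 hk2 hk h1 h2 hu hv hadj
  · rintro u₁ hu₁ u₂ hu₂ hne v hv ⟨ha1, ha2⟩
    exact hne (claim2 hk2 hk h1 h2 hu₁ hu₂ hv
      (claim1 hk2 hk h1 h2 hu₁ hv ha1) (claim1 hk2 hk h1 h2 hu₂ hv ha2))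
  · intro u hu
    exact claim3 hk2 hk h1 h2 hu
  · have hXfin : (lastFixed n k h : Set (Fin k ↪ Fin n)).Finite := Set.toFinite _
    have hNfin : ∀ u : Fin k ↪ Fin n,
        ((nkStar n k).neighborSet u \ lastFixed n k h).Finite := fun u => Set.toFinite _
    have hTfin : {v | v ∉ lastFixed n k h ∧
        ∃ u ∈ lastFixed n k h, (nkStar n k).Adj u v}.Finite := Set.toFinite _
    have hTeq : {v | v ∉ lastFixed n k h ∧ ∃ u ∈ lastFixed n k h, (nkStar n k).Adj u v}
        = ⋃ u ∈ lastFixed n k h, ((nkStar n k).neighborSet u \ lastFixed n k h) := by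
      ext v
      simp only [Set.mem_iUnion, Set.mem_setOf_eq, Set.mem_diff, mem_neighborSet,
        exists_prop]
      constructor
      · rintro ⟨hv, u, hu, hadj⟩; exact ⟨u, hu, hadj, hv⟩
      · rintro ⟨u, hu, hadj, hv⟩; exact ⟨hv, u, hu, hadj⟩
    have key : hTfin.toFinset = hXfin.toFinset.biUnion (fun u => (hNfin u).toFinset) := by
      ext v
      simp only [Set.Finite.mem_toFinset, Finset.mem_biUnion, hTeq, Set.mem_iUnion,
        exists_prop]
    have hcard : hTfin.toFinset.card = ∑ u ∈ hXfin.toFinset, ((hNfin u).toFinset).card := by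
      rw [key]
      apply Finset.card_biUnion
      intro u₁ hm1 u₂ hm2 hne
      rw [Function.onFun, Finset.disjoint_left]
      intro v hv1 hv2
      rw [Set.Finite.mem_toFinset] at hv1 hv2
      rw [Finset.mem_coe, Set.Finite.mem_toFinset] at hm1 hm2
      exact hne (claim2 hk2 hk h1 h2 hm1 hm2 hv1.2
        (claim1 hk2 hk h1 h2 hm1 hv1.2 hv1.1) (claim1 hk2 hk h1 h2 hm2 hv2.2 hv2.1))
    have hterm : ∀ u ∈ hXfin.toFinset, ((hNfin u).toFinset).card = n - 1 - h := by
      intro u hu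
      rw [Set.Finite.mem_toFinset] at hu
      rw [← Set.ncard_eq_toFinset_card _ (hNfin u)]
      exact claim3 hk2 hk h1 h2 hu
    rw [Set.ncard_eq_toFinset_card _ hTfin, hcard, Finset.sum_congr rfl hterm,
      Finset.sum_const, smul_eq_mul]
    have hX : hXfin.toFinset.card = (h + 1).factorial / (n - k).factorial := by
      rw [← Set.ncard_eq_toFinset_card _ hXfin]
      exact X_ncard hk2 hk h1 h2
    rw [hX]
    obtain ⟨d, hd⟩ := Nat.factorial_dvd_factorial (show n - k ≤ h + 1 by omega)
    rw [hd, Nat.mul_div_cancel_left _ (Nat.factorial_pos _), mul_assoc,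
      Nat.mul_div_cancel_left _ (Nat.factorial_pos _)]
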